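/- Simons' identity: for a smooth immersed hypersurface f : Mⁿ → ℝ^{n+1} with second fundamental form A_{ij} and mean curvature H = g^{ij}A_{ij}, the Laplace–Beltrami operator satisfies ΔA_{ij} = ∇ᵢ∇ⱼH + H·A_iˡA_{lj} − ‖A‖²·A_{ij}. -/
import Mathlib


open Finset

/-- Simons' identity in an orthonormal frame at a point. Here `A i j` are the components
of the second fundamental form, `A₃ i j k l` the components of `∇ᵢ∇ⱼA_{kl}`, the mean
curvature is `H = ∑ k, A k k`, and `‖A‖² = ∑ k l, (A k l)²`. The hypotheses are: symmetry
of `A`; the Codazzi equations (symmetry of `∇∇A` in all but the outermost index); and the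
commutation rule for interchanging covariant derivatives on a 2-tensor, with the Gauss
equation `R_{ijkl} = A_{ik}A_{jl} − A_{il}A_{jk}` substituted. The conclusion is
`ΔA_{ij} = ∇ᵢ∇ⱼH + H·(A²)_{ij} − ‖A‖²·A_{ij}`. -/
theorem stmt_19 (n : ℕ) (A : Fin n → Fin n → ℝ)
    (A₃ : Fin n → Fin n → Fin n → Fin n → ℝ)
    (hAsym : ∀ i j, A i j = A j i)
    (hCod1 : ∀ i j k l, A₃ i j k l = A₃ i k j l)
    (hCod2 : ∀ i j k l, A₃ i j k l = A₃ i j l k)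
    (hComm : ∀ i j k l, A₃ i j k l - A₃ j i k l =
      ∑ m : Fin n, ((A i k * A j m - A i m * A j k) * A m l
          + (A i l * A j m - A i m * A j l) * A k m)) :
    ∀ i j, ∑ p : Fin n, A₃ p p i j =
      (∑ k : Fin n, A₃ i j k k)
      + (∑ k : Fin n, A k k) * (∑ l : Fin n, A i l * A l j)
      - (∑ k : Fin n, ∑ l : Fin n, A k l * A k l) * A i j := by
  intro i j
  have key : ∀ p, A₃ p p i j = A₃ i j p p
      + ∑ m : Fin n, ((A p p * A i m - A p m * A i p) * A m j
          + (A p j * A i m - A p m * A i j) * A p m) := by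
    intro p
    have h1 := hCod1 p p i j
    have h2 := hCod2 i p p j
    have h3 := hCod1 i p j p
    have h4 := hComm p i p j
    linarith
  simp only [key]
  rw [Finset.sum_add_distrib]
  have swap : ∑ p : Fin n, ∑ m : Fin n, A p j * A i m * A p m
      = ∑ p : Fin n, ∑ m : Fin n, A p m * A i p * A m j := by
    rw [Finset.sum_comm]
    apply Finset.sum_congr rfl; intro p _
    apply Finset.sum_congr rfl; intro m _
    rw [hAsym m p]; ring
  have expand : ∀ p, ∑ m : Fin n, ((A p p * A i m - A p m * A i p) * A m j
          + (A p j * A i m - A p m * A i j) * A p m)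
      = (∑ m : Fin n, A p p * A i m * A m j)
        - (∑ m : Fin n, A p m * A i p * A m j)
        + (∑ m : Fin n, A p j * A i m * A p m)
        - (∑ m : Fin n, A p m * A p m * A i j) := by
    intro p
    have h5 : ∀ m : Fin n, A p m * A i j * A p m = A p m * A p m * A i j := fun m => by ring
    simp only [sub_mul, Finset.sum_sub_distrib, Finset.sum_add_distrib, h5]
    ring
  simp only [expand]
  rw [Finset.sum_sub_distrib, Finset.sum_add_distrib, Finset.sum_sub_distrib, swap]
  have hH : ∑ p : Fin n, ∑ m : Fin n, A p p * A i m * A m j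
      = (∑ k : Fin n, A k k) * (∑ l : Fin n, A i l * A l j) := by
    rw [Finset.sum_mul_sum]
    apply Finset.sum_congr rfl; intro p _
    apply Finset.sum_congr rfl; intro m _
    ring
  have hN : ∑ p : Fin n, ∑ m : Fin n, A p m * A p m * A i j
      = (∑ k : Fin n, ∑ l : Fin n, A k l * A k l) * A i j := by
    rw [Finset.sum_mul]
    apply Finset.sum_congr rfl; intro p _
    rw [Finset.sum_mul]
  rw [hH, hN]
  ring
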